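/- Let G ⊆ ℝᴺ be open and connected and f : G → ℝ Lipschitz with 𝕃ip f(x) = 0 for Lebesgue-almost every x ∈ G. Then f is constant on G. -/

import Mathlib

open Filter Metric Topology MeasureTheory Set ENNReal

section aux
lemma lip1d_le {K : NNReal} {h : ℝ → ℝ} (hh : LipschitzWith K h) {a b : ℝ} (hab : a ≤ b)
    (hd : ∀ᵐ t, t ∈ Set.Ioo a b → HasDerivAt h 0 t) : h a ≤ h b := by
  rcases eq_or_lt_of_le hab with rfl | hab
  · exact le_rfl
  set g : ℝ → ℝ := fun t => h t + K * t with hgdef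
  have hgm : Monotone g := by
    intro s t hst
    have h1 : |h s - h t| ≤ K * |s - t| := by
      simpa [Real.dist_eq] using hh.dist_le_mul s t
    rw [abs_sub_comm s t, abs_of_nonneg (by linarith : (0:ℝ) ≤ t - s)] at h1
    have h2 := (abs_le.1 h1).2
    have h3 : (K:ℝ) * (t - s) = K * t - K * s := by ring
    simp only [g]
    linarith
  have hgc : Continuous g := hh.continuous.add (continuous_const.mul continuous_id)
  set M := hgm.stieltjesFunction.measure with hM
  have A := hgm.ae_hasDerivAt
  have B := MeasureTheory.Measure.rnDeriv_lt_top M volume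
  have key : ∀ᵐ t, t ∈ Set.Ioo a b → M.rnDeriv volume t = ENNReal.ofReal K := by
    filter_upwards [A, B, hd] with t hA hB hd' ht
    have hg' : HasDerivAt g ((0 : ℝ) + K * 1) t :=
      (hd' ht).add ((hasDerivAt_id t).const_mul (K : ℝ))
    have := hA.unique hg'
    rw [← ENNReal.ofReal_toReal hB.ne, this]
    norm_num
  have hcalc : ENNReal.ofReal (K * (b - a)) ≤ ENNReal.ofReal (g b - g a) := by
    calc ENNReal.ofReal (K * (b - a))
        = ∫⁻ _ in Set.Ioo a b, ENNReal.ofReal K ∂volume := by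
          rw [MeasureTheory.setLIntegral_const, Real.volume_Ioo,
            ← ENNReal.ofReal_mul K.coe_nonneg]
      _ = ∫⁻ t in Set.Ioo a b, M.rnDeriv volume t ∂volume := by
          refine lintegral_congr_ae ?_
          exact ((ae_restrict_iff' measurableSet_Ioo).2
            (key.mono fun t ht h't => (ht h't).symm))
      _ ≤ M (Set.Ioo a b) := MeasureTheory.Measure.setLIntegral_rnDeriv_le _
      _ ≤ M (Set.Ioc a b) := measure_mono Set.Ioo_subset_Ioc_self
      _ = ENNReal.ofReal (g b - g a) := by
          rw [StieltjesFunction.measure_Ioc]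
          have hbb : hgm.stieltjesFunction b = g b := by
            rw [hgm.stieltjesFunction_eq]
            exact rightLim_eq_of_tendsto ((hgc.tendsto b).mono_left nhdsWithin_le_nhds)
          have haa : hgm.stieltjesFunction a = g a := by
            rw [hgm.stieltjesFunction_eq]
            exact rightLim_eq_of_tendsto ((hgc.tendsto a).mono_left nhdsWithin_le_nhds)
          rw [hbb, haa]
  have : (K : ℝ) * (b - a) ≤ g b - g a :=
    (ENNReal.ofReal_le_ofReal_iff (sub_nonneg.2 (hgm hab.le))).1 hcalc
  simp only [g] at this
  have h3 : (K:ℝ) * (b - a) = K * b - K * a := by ring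
  linarith

lemma lip1d_eq {K : NNReal} {h : ℝ → ℝ} (hh : LipschitzWith K h) {a b : ℝ} (hab : a ≤ b)
    (hd : ∀ᵐ t, t ∈ Set.Ioo a b → HasDerivAt h 0 t) : h a = h b := by
  refine le_antisymm (lip1d_le hh hab hd) ?_
  have hd' : ∀ᵐ t, t ∈ Set.Ioo a b → HasDerivAt (fun s => -h s) 0 t := by
    filter_upwards [hd] with t ht h't
    have := (ht h't).neg; rw [neg_zero] at this; exact this
  have := lip1d_le hh.neg hab hd'
  simpa using this
end aux

/-- The local Lipschitz derivative of `f` relative to the set `G`. -/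
noncomputable def LLipOn {X Y : Type*} [MetricSpace X] [MetricSpace Y]
    (f : X → Y) (G : Set X) (x : X) : ℝ≥0∞ :=
  ⨅ (r : ℝ) (_ : 0 < r),
    ⨆ (u : X) (_ : u ∈ ball x r ∩ G) (v : X) (_ : v ∈ ball x r ∩ G) (_ : u ≠ v),
      ENNReal.ofReal (dist (f u) (f v) / dist u v)

theorem const_of_LLip_ae_zero (N : ℕ) (G : Set (EuclideanSpace ℝ (Fin N)))
    (hG : IsOpen G) (hc : IsConnected G)
    (f : EuclideanSpace ℝ (Fin N) → ℝ) (K : NNReal) (hf : LipschitzOnWith K f G)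
    (h : ∀ᵐ x, x ∈ G → LLipOn f G x = 0) :
    ∀ x ∈ G, ∀ y ∈ G, f x = f y := by
  classical
  have rad := hf.ae_differentiableWithinAt_of_mem (μ := volume)
  have step1 : ∀ᵐ x, x ∈ G → (DifferentiableAt ℝ f x ∧ fderiv ℝ f x = 0) := by
    filter_upwards [h, rad] with x hx hdiff hxG
    have hdA : DifferentiableAt ℝ f x := (hdiff hxG).differentiableAt (hG.mem_nhds hxG)
    refine ⟨hdA, ?_⟩
    have hnorm : ∀ ε : ℝ, 0 < ε → ‖fderiv ℝ f x‖ ≤ ε := by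
      intro ε hε
      have h0 : LLipOn f G x < ENNReal.ofReal ε := by
        rw [hx hxG]; exact ENNReal.ofReal_pos.2 hε
      rw [LLipOn, iInf_lt_iff] at h0
      obtain ⟨r, h0⟩ := h0
      rw [iInf_lt_iff] at h0
      obtain ⟨hr, hsup⟩ := h0
      have hlip : LipschitzOnWith ε.toNNReal f (ball x r ∩ G) := by
        rw [lipschitzOnWith_iff_dist_le_mul]
        intro u hu v hv
        rcases eq_or_ne u v with rfl | huv
        · simp
        have hle : ENNReal.ofReal (dist (f u) (f v) / dist u v) < ENNReal.ofReal ε := by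
          refine lt_of_le_of_lt ?_ hsup
          exact le_iSup_of_le u (le_iSup_of_le hu (le_iSup_of_le v (le_iSup_of_le hv
            (le_iSup_of_le huv le_rfl))))
        have hdist : (0:ℝ) < dist u v := dist_pos.2 huv
        have h2 := (ENNReal.ofReal_lt_ofReal_iff hε).1 hle
        rw [div_lt_iff₀ hdist] at h2
        calc dist (f u) (f v) ≤ ε * dist u v := h2.le
        _ = ε.toNNReal * dist u v := by rw [Real.coe_toNNReal _ hε.le]
      have hle2 := hdA.hasFDerivAt.le_of_lipschitzOn
        (inter_mem (ball_mem_nhds x hr) (hG.mem_nhds hxG)) hlip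
      rwa [Real.coe_toNNReal _ hε.le] at hle2
    have hz : ‖fderiv ℝ f x‖ ≤ 0 := by
      by_contra hcon
      push_neg at hcon
      linarith [hnorm (‖fderiv ℝ f x‖/2) (by linarith)]
    exact norm_le_zero_iff.1 hz
  set Bad := {x | x ∈ G ∧ ¬(DifferentiableAt ℝ f x ∧ fderiv ℝ f x = 0)} with hBadDef
  have hBadnull : volume Bad = 0 := by
    have : ∀ᵐ x, x ∉ Bad := by
      filter_upwards [step1] with x hx hmem
      exact hmem.2 (hx hmem.1)
    exact measure_eq_zero_iff_ae_notMem.2 this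
  set T := toMeasurable volume Bad with hTdef
  have hT0 : volume T = 0 := by rw [hTdef, measure_toMeasurable]; exact hBadnull
  have hTm : MeasurableSet T := measurableSet_toMeasurable _ _
  have hBT : Bad ⊆ T := subset_toMeasurable _ _
  -- local constancy
  have loc : ∀ (z : EuclideanSpace ℝ (Fin N)) (r : ℝ), 0 < r → ball z (4*r) ⊆ G →
      ∀ x ∈ ball z r, ∀ y ∈ ball z r, f x = f y := by
    intro z r hr hball x hx y hy
    set v := y - x with hv
    have hgood : ∀ᵐ (p : EuclideanSpace ℝ (Fin N)), ∀ᵐ (t : ℝ),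
        p + (LinearMap.toSpanSingleton ℝ _ v) t ∈ Tᶜ := by
      rw [MeasureTheory.ae_ae_add_linearMap_mem_iff (LinearMap.toSpanSingleton ℝ _ v)
        volume volume hTm.compl]
      exact measure_eq_zero_iff_ae_notMem.1 hT0
    simp only [LinearMap.toSpanSingleton_apply] at hgood
    have exgood : ∀ δ : ℝ, 0 < δ → ∃ p, p ∈ ball x δ ∧ ∀ᵐ t : ℝ, p + t • v ∈ Tᶜ := by
      intro δ hδ
      by_contra hcon
      push_neg at hcon
      have hsub : ball x δ ⊆ {p | ¬ ∀ᵐ t : ℝ, p + t • v ∈ Tᶜ} := fun p hp => Filter.not_eventually.2 (hcon p hp)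
      have h0 : volume (ball x δ) = 0 := measure_mono_null hsub (ae_iff.1 hgood)
      exact (measure_ball_pos volume x hδ).ne' h0
    have key : ∀ p ∈ ball x r, (∀ᵐ t : ℝ, p + t • v ∈ Tᶜ) → f p = f (p + v) := by
      intro p hp hae
      have hvnorm : ‖v‖ < 2*r := by
        calc ‖v‖ = dist y x := by rw [hv, dist_eq_norm]
        _ ≤ dist y z + dist z x := dist_triangle _ _ _
        _ < r + r := add_lt_add hy (by rw [dist_comm]; exact hx)
        _ = 2*r := by ring
      have hseg : ∀ t ∈ Icc (0:ℝ) 1, p + t • v ∈ ball z (4*r) := by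
        intro t ht
        have h1 : dist p z < 2*r := by
          calc dist p z ≤ dist p x + dist x z := dist_triangle _ _ _
          _ < r + r := add_lt_add hp hx
          _ = 2*r := by ring
        have h2 : dist (p + t • v) p ≤ ‖v‖ := by
          rw [dist_eq_norm, add_sub_cancel_left, norm_smul, Real.norm_eq_abs,
            abs_of_nonneg ht.1]
          nlinarith [norm_nonneg v, ht.2]
        calc dist (p + t • v) z ≤ dist (p + t • v) p + dist p z := dist_triangle _ _ _
        _ < ‖v‖ + 2*r := by linarith [lt_of_le_of_lt (le_refl (dist (p + t•v) p)) (lt_of_le_of_lt h2 hvnorm)]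
        _ < 2*r + 2*r := by linarith
        _ = 4*r := by ring
      set proj : ℝ → ℝ := fun t => max 0 (min 1 t) with hprojdef
      have hproj_mem : ∀ t, proj t ∈ Icc (0:ℝ) 1 :=
        fun t => ⟨le_max_left _ _, max_le (by norm_num) (min_le_left _ _)⟩
      have hproj_lip : LipschitzWith 1 proj := (LipschitzWith.id.const_min 1).const_max 0
      set h1 : ℝ → ℝ := fun t => f (p + proj t • v) with h1def
      have h1lip : LipschitzWith (K * ‖v‖₊) h1 := by
        apply LipschitzWith.of_dist_le_mul
        intro s t
        have hmem1 : p + proj s • v ∈ G := hball (hseg _ (hproj_mem s))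
        have hmem2 : p + proj t • v ∈ G := hball (hseg _ (hproj_mem t))
        have hd1 := lipschitzOnWith_iff_dist_le_mul.1 hf _ hmem1 _ hmem2
        have hd2 : dist (p + proj s • v) (p + proj t • v) ≤ ‖v‖ * dist s t := by
          rw [dist_eq_norm]
          have : p + proj s • v - (p + proj t • v) = (proj s - proj t) • v := by
            rw [sub_smul]; abel
          rw [this, norm_smul, Real.norm_eq_abs]
          have := hproj_lip.dist_le_mul s t
          rw [NNReal.coe_one, one_mul, Real.dist_eq] at this
          nlinarith [norm_nonneg v, abs_nonneg (proj s - proj t), dist_nonneg (x := s) (y := t)]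
        calc dist (h1 s) (h1 t) ≤ K * dist (p + proj s • v) (p + proj t • v) := hd1
        _ ≤ K * (‖v‖ * dist s t) := by
            exact mul_le_mul_of_nonneg_left hd2 K.coe_nonneg
        _ = (K * ‖v‖₊ : NNReal) * dist s t := by push_cast [coe_nnnorm]; ring
      have h1d : ∀ᵐ t, t ∈ Ioo (0:ℝ) 1 → HasDerivAt h1 0 t := by
        filter_upwards [hae] with t hTt ht
        set q := p + t • v with hq
        have hqG : q ∈ G := hball (hseg t (Ioo_subset_Icc_self ht))
        have hqS : DifferentiableAt ℝ f q ∧ fderiv ℝ f q = 0 := by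
          by_contra hcon
          exact hTt (hBT ⟨hqG, hcon⟩)
        have hcurve : HasDerivAt (fun s : ℝ => p + s • v) v t := by
          simpa using ((hasDerivAt_id t).smul_const v).const_add p
        have hderiv : HasDerivAt (fun s : ℝ => f (p + s • v)) (fderiv ℝ f q v) t :=
          hqS.1.hasFDerivAt.comp_hasDerivAt t hcurve
        rw [hqS.2] at hderiv
        simp only [ContinuousLinearMap.zero_apply] at hderiv
        have hev : h1 =ᶠ[𝓝 t] fun s => f (p + s • v) := by
          filter_upwards [Ioo_mem_nhds ht.1 ht.2] with s hs
          simp only [h1def, hprojdef]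
          rw [min_eq_right hs.2.le, max_eq_right hs.1.le]
        exact hderiv.congr_of_eventuallyEq hev
      have heq := lip1d_eq h1lip zero_le_one h1d
      simpa [h1def, hprojdef] using heq
    have hxy : ∀ n : ℕ, ∃ p, p ∈ ball x (min r (1/(n+1))) ∧ f p = f (p + v) := by
      intro n
      obtain ⟨p, hp, hae⟩ := exgood (min r (1/(n+1))) (lt_min hr (by positivity))
      exact ⟨p, hp, key p (mem_ball.2 (lt_of_lt_of_le (mem_ball.1 hp) (min_le_left _ _))) hae⟩
    choose ps hps hfeq using hxy
    have hlim : Tendsto ps atTop (𝓝 x) := by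
      rw [tendsto_iff_dist_tendsto_zero]
      apply squeeze_zero (fun n => dist_nonneg)
        (fun n => le_of_lt (lt_of_lt_of_le (hps n) (min_le_right _ _)))
      exact tendsto_one_div_add_atTop_nhds_zero_nat
    have hpsG : ∀ n, ps n ∈ G := by
      intro n
      apply hball
      have : dist (ps n) x < r := lt_of_lt_of_le (hps n) (min_le_left _ _)
      calc dist (ps n) z ≤ dist (ps n) x + dist x z := dist_triangle _ _ _
      _ < r + r := add_lt_add this hx
      _ ≤ 4*r := by linarith
    have hpsvG : ∀ n, ps n + v ∈ G := by
      intro n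
      apply hball
      have h1 : dist (ps n) x < r := lt_of_lt_of_le (hps n) (min_le_left _ _)
      calc dist (ps n + v) z ≤ dist (ps n + v) (x + v) + dist (x + v) z := dist_triangle _ _ _
      _ = dist (ps n) x + dist (x + v) z := by rw [dist_add_right]
      _ = dist (ps n) x + dist y z := by rw [show x + v = y by rw [hv]; abel]
      _ < r + r := add_lt_add h1 hy
      _ ≤ 4*r := by linarith
    have hxG : x ∈ G := hball (by
      calc dist x z < r := hx
      _ ≤ 4*r := by linarith)
    have hyG : y ∈ G := hball (by
      calc dist y z < r := hy
      _ ≤ 4*r := by linarith)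
    have ht1 : Tendsto (fun n => f (ps n)) atTop (𝓝 (f x)) := by
      apply (hf.continuousOn x hxG).tendsto.comp
      rw [tendsto_nhdsWithin_iff]
      exact ⟨hlim, Eventually.of_forall hpsG⟩
    have ht2 : Tendsto (fun n => f (ps n + v)) atTop (𝓝 (f y)) := by
      have hlim2 : Tendsto (fun n => ps n + v) atTop (𝓝 y) := by
        have : x + v = y := by rw [hv]; abel
        simpa [this] using hlim.add_const v
      apply (hf.continuousOn y hyG).tendsto.comp
      rw [tendsto_nhdsWithin_iff]
      exact ⟨hlim2, Eventually.of_forall hpsvG⟩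
    have : Tendsto (fun n => f (ps n)) atTop (𝓝 (f y)) := by
      simpa [hfeq] using ht2
    exact tendsto_nhds_unique ht1 this
  -- connectedness
  intro x hx y hy
  set U := {w | w ∈ G ∧ f w = f x} with hUdef
  set V := {w | w ∈ G ∧ f w ≠ f x} with hVdef
  have hconst_ball : ∀ w ∈ G, ∃ ρ > 0, ball w ρ ⊆ G ∧ ∀ u ∈ ball w ρ, f u = f w := by
    intro w hw
    obtain ⟨R, hR, hRsub⟩ := Metric.isOpen_iff.1 hG w hw
    refine ⟨R/4, by linarith, fun u hu => hRsub (mem_ball.2 (lt_of_lt_of_le (mem_ball.1 hu) (by linarith))), ?_⟩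
    intro u hu
    exact loc w (R/4) (by linarith)
      (by rw [show (4:ℝ)*(R/4) = R by ring]; exact hRsub) u hu w (mem_ball_self (by linarith))
  have hU : IsOpen U := by
    rw [isOpen_iff_forall_mem_open]
    intro w hw
    obtain ⟨ρ, hρ, hρG, hρc⟩ := hconst_ball w hw.1
    exact ⟨ball w ρ, fun u hu => ⟨hρG hu, (hρc u hu).trans hw.2⟩, isOpen_ball,
      mem_ball_self hρ⟩
  have hV : IsOpen V := by
    rw [isOpen_iff_forall_mem_open]
    intro w hw
    obtain ⟨ρ, hρ, hρG, hρc⟩ := hconst_ball w hw.1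
    exact ⟨ball w ρ, fun u hu => ⟨hρG hu, by rw [hρc u hu]; exact hw.2⟩, isOpen_ball,
      mem_ball_self hρ⟩
  by_contra hne
  have hyV : y ∈ V := ⟨hy, fun hc => hne hc.symm⟩
  obtain ⟨w, hwG, hwU, hwV⟩ := hc.isPreconnected U V hU hV
    (fun w hw => by
      by_cases hfw : f w = f x
      · exact Or.inl ⟨hw, hfw⟩
      · exact Or.inr ⟨hw, hfw⟩)
    ⟨x, hx, hx, rfl⟩ ⟨y, hy, hyV⟩
  exact hwV.2 hwU.2
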